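/- arXiv:2404.03530 — 2 statements merged into one kernel-verified Lean document; each statement's English description precedes it below -/
import Mathlib

section
/- Let F ⊂ R = K[x_1,...,x_n] with D := d_reg(⟨F^top⟩) < ∞ and let G_hom be the reduced Gröbner basis of ⟨F^h⟩ ⊂ R' = R[y] with respect to the homogenized DRL ordering. Then for every monomial M in x_1,...,x_n of degree D, there exists g ∈ G_hom of degree ≤ D with LM(g) dividing M; equivalently ⟨LM((G_hom)_{≤D})⟩_{R'} ∩ R_D = R_D. Moreover, any g ∈ (G_hom)_D whose top part g|_{y=0} is nonzero has g|_{y=0} equal to its leading term (a single term). -/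
open MvPolynomial

namespace GBPaper

/-- The dimension of the degree-`d` homogeneous piece of `R/I`,
where `R = K[x_i : i ∈ σ]`. -/
noncomputable def hilbertFn (K : Type*) [Field K] {σ : Type*}
    (I : Ideal (MvPolynomial σ K)) (d : ℕ) : ℕ :=
  Module.finrank K
    ((MvPolynomial.homogeneousSubmodule σ K d).map
      (Ideal.Quotient.mkₐ K I).toLinearMap)

/-- An ideal is homogeneous iff it contains all homogeneous components of its elements. -/
def IsHomogeneousIdeal {K : Type*} [Field K] {σ : Type*}
    (I : Ideal (MvPolynomial σ K)) : Prop :=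
  ∀ f ∈ I, ∀ d : ℕ, MvPolynomial.homogeneousComponent d f ∈ I

/-- The degree of regularity: the least `d` with `R_d = I_d`. -/
noncomputable def degReg (K : Type*) [Field K] {σ : Type*}
    (I : Ideal (MvPolynomial σ K)) : ℕ :=
  sInf {d : ℕ | ∀ f : MvPolynomial σ K, f.IsHomogeneous d → f ∈ I}

/-- The generalized degree of regularity: the least `d₀` from which on the Hilbert
function of `R/I` is constant. -/
noncomputable def gdegReg (K : Type*) [Field K] {σ : Type*}
    (I : Ideal (MvPolynomial σ K)) : ℕ :=
  sInf {d₀ : ℕ | ∀ d : ℕ, d₀ ≤ d → hilbertFn K I d = hilbertFn K I d₀}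

/-- The leading monomial (leading exponent) of a polynomial with respect to a
monomial order. -/
noncomputable def lm {K : Type*} [Field K] {σ : Type*} (m : MonomialOrder σ)
    (f : MvPolynomial σ K) : σ →₀ ℕ :=
  m.toSyn.symm (f.support.sup fun s => m.toSyn s)

/-- A monomial order is graded (degree-compatible) if it refines total degree. -/
def MonIsGraded {σ : Type*} (m : MonomialOrder σ) : Prop :=
  ∀ a b : σ →₀ ℕ, a.degree < b.degree → m.toSyn a < m.toSyn b

/-- `G` is the reduced Gröbner basis of `I` with respect to the monomial order `m`. -/
structure IsReducedGB {K : Type*} [Field K] {σ : Type*} (m : MonomialOrder σ)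
    (I : Ideal (MvPolynomial σ K)) (G : Finset (MvPolynomial σ K)) : Prop where
  subset : (G : Set (MvPolynomial σ K)) ⊆ I
  zero_not_mem : (0 : MvPolynomial σ K) ∉ G
  monic : ∀ g ∈ G, MvPolynomial.coeff (lm m g) g = 1
  isGB : ∀ f ∈ I, f ≠ 0 → ∃ g ∈ G, lm m g ≤ lm m f
  reduced : ∀ g ∈ G, ∀ g' ∈ G, g ≠ g' → ∀ s ∈ g.support, ¬ lm m g' ≤ s

/-- The degree reverse lexicographic order with `x_0 ≻ x_1 ≻ ⋯`. -/
def IsDegRevLex {n : ℕ} (m : MonomialOrder (Fin n)) : Prop :=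
  ∀ a b : Fin n →₀ ℕ, m.toSyn a < m.toSyn b ↔
    (a.degree < b.degree ∨
      (a.degree = b.degree ∧ ∃ i, b i < a i ∧ ∀ j, i < j → a j = b j))

/-- Restriction of an exponent vector on `n+1` variables to the first `n` variables. -/
noncomputable def restr {n : ℕ} (a : Fin (n + 1) →₀ ℕ) : Fin n →₀ ℕ :=
  Finsupp.equivFunOnFinite.symm fun i => a i.castSucc

/-- Extension of an exponent vector on `n` variables to `n+1` variables (with
`y`-exponent `0`). -/
noncomputable def extX {n : ℕ} (a : Fin n →₀ ℕ) : Fin (n + 1) →₀ ℕ :=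
  Finsupp.embDomain Fin.castSuccEmb a

/-- `m'` is the homogenization (w.r.t. the last variable `y`) of the graded
monomial order `m₀`: it compares first total degrees, then the `X`-parts using `m₀`. -/
def IsHomogenizationOrder {n : ℕ} (m' : MonomialOrder (Fin (n + 1)))
    (m₀ : MonomialOrder (Fin n)) : Prop :=
  ∀ a b : Fin (n + 1) →₀ ℕ, m'.toSyn a < m'.toSyn b ↔
    (a.degree < b.degree ∨
      (a.degree = b.degree ∧ m₀.toSyn (restr a) < m₀.toSyn (restr b)))

/-- The top part (maximal total degree part) of a polynomial. -/
noncomputable def topPart {K : Type*} [Field K] {σ : Type*}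
    (f : MvPolynomial σ K) : MvPolynomial σ K :=
  MvPolynomial.homogeneousComponent f.totalDegree f

/-- The homogenization of `f ∈ K[x_1,…,x_n]` by the extra (last) variable `y`. -/
noncomputable def homog {K : Type*} [Field K] {n : ℕ}
    (f : MvPolynomial (Fin n) K) : MvPolynomial (Fin (n + 1)) K :=
  ∑ s ∈ f.support,
    MvPolynomial.monomial
      (extX s + Finsupp.single (Fin.last n) (f.totalDegree - s.degree))
      (f.coeff s)

/-- The last variable `y` used for homogenization. -/
noncomputable def yvar (K : Type*) [Field K] (n : ℕ) : MvPolynomial (Fin (n + 1)) K :=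
  MvPolynomial.X (Fin.last n)

/-- Substituting `y = 0`, the "top part" of a homogeneous polynomial in `R[y]`. -/
noncomputable def setYZero {K : Type*} [Field K] {n : ℕ}
    (g : MvPolynomial (Fin (n + 1)) K) : MvPolynomial (Fin (n + 1)) K :=
  MvPolynomial.aeval
    (fun i => if i = Fin.last n then 0 else MvPolynomial.X i) g

/-- The ideal generated by the polynomials `f j` for `j < i`. -/
noncomputable def prevIdeal {K : Type*} [Field K] {σ : Type*} {M : ℕ}
    (f : Fin M → MvPolynomial σ K) (i : Fin M) : Ideal (MvPolynomial σ K) :=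
  Ideal.span (f '' {j | j < i})

/-- `d`-regularity of a sequence of homogeneous polynomials of degrees `dg`. -/
def IsDRegularSeq {K : Type*} [Field K] {σ : Type*} {M : ℕ}
    (f : Fin M → MvPolynomial σ K) (dg : Fin M → ℕ) (d : ℕ) : Prop :=
  ∀ i : Fin M, ∀ g : MvPolynomial σ K, ∀ e : ℕ,
    g.IsHomogeneous e → e + dg i < d →
    g * f i ∈ prevIdeal f i → g ∈ prevIdeal f i

/-- Semi-regularity (Pardue): each multiplication map on graded pieces of the
successive quotients is injective or surjective. -/
def IsSemiRegularSeq {K : Type*} [Field K] {σ : Type*} {M : ℕ}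
    (f : Fin M → MvPolynomial σ K) (dg : Fin M → ℕ) : Prop :=
  ∀ i : Fin M, ∀ t : ℕ, dg i ≤ t →
    (∀ g : MvPolynomial σ K, g.IsHomogeneous (t - dg i) →
        g * f i ∈ prevIdeal f i → g ∈ prevIdeal f i) ∨
    (∀ h : MvPolynomial σ K, h.IsHomogeneous t →
        ∃ g : MvPolynomial σ K, g.IsHomogeneous (t - dg i) ∧
          h - g * f i ∈ prevIdeal f i)

/-- The power series `∏ (1 - z^{d_i}) / (1-z)^n` over `ℤ`. -/
noncomputable def semiRegSeries (n : ℕ) {M : ℕ} (dg : Fin M → ℕ) : PowerSeries ℤ :=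
  (∏ i : Fin M, (1 - (PowerSeries.X : PowerSeries ℤ) ^ dg i)) *
    ((PowerSeries.invOneSubPow ℤ n : (PowerSeries ℤ)ˣ) : PowerSeries ℤ)

/-- The cutoff of the truncation `[·]`: the first index with a nonpositive coefficient. -/
noncomputable def truncCutoff (P : PowerSeries ℤ) : ℕ :=
  sInf {t : ℕ | PowerSeries.coeff t P ≤ 0}

/-- The coefficient of `z^t` in the series `[P]` obtained by truncating `P` after
the last consecutive positive coefficient. -/
noncomputable def truncCoeff (P : PowerSeries ℤ) (t : ℕ) : ℤ :=
  if t < truncCutoff P then PowerSeries.coeff t P else 0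

section Koszul

variable {K : Type*} [Field K] {σ : Type*} {M : ℕ}

/-- Index set of the degree-`i` part of the Koszul complex on `M` polynomials. -/
abbrev KIdx (M i : ℕ) := {s : Finset (Fin M) // s.card = i}

/-- The Koszul differential `K_{i+1} → K_i` of the Koszul complex on `f`. -/
noncomputable def koszulD (f : Fin M → MvPolynomial σ K) (i : ℕ)
    (v : KIdx M (i + 1) → MvPolynomial σ K) :
    KIdx M i → MvPolynomial σ K :=
  fun t => ∑ j : Fin M,
    if h : j ∈ t.val then 0
    else ((-1 : MvPolynomial σ K) ^ (t.val.filter (fun l => l < j)).card) * f j *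
      v ⟨insert j t.val, by rw [Finset.card_insert_of_notMem h, t.prop]⟩

/-- A Koszul `i`-chain is homogeneous of (internal) degree `d`: each component at a
subset `s` is homogeneous of degree `d - ∑_{j ∈ s} dg j` (and zero if `d` is smaller
than this shift). -/
def KChainHom (dg : Fin M → ℕ) (i : ℕ)
    (v : KIdx M i → MvPolynomial σ K) (d : ℕ) : Prop :=
  ∀ t : KIdx M i,
    (v t).IsHomogeneous (d - ∑ j ∈ t.val, dg j) ∧
    (d < ∑ j ∈ t.val, dg j → v t = 0)

/-- A Koszul `i`-cycle: an `i`-chain killed by the Koszul differential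
(every `0`-chain is a cycle). -/
def IsKCycle (f : Fin M → MvPolynomial σ K) :
    (i : ℕ) → (KIdx M i → MvPolynomial σ K) → Prop
  | 0, _ => True
  | (i + 1), v => koszulD f i v = 0

/-- The degree-`d` part of the `i`-th Koszul homology of `f` vanishes:
every homogeneous cycle of degree `d` is a boundary. -/
def KoszulHVanish (f : Fin M → MvPolynomial σ K) (dg : Fin M → ℕ)
    (i d : ℕ) : Prop :=
  ∀ v : KIdx M i → MvPolynomial σ K, KChainHom dg i v d → IsKCycle f i v →
    ∃ w : KIdx M (i + 1) → MvPolynomial σ K, koszulD f i w = v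

/-- The sum `∑ v_j f_j` of which syzygies are the kernel. -/
noncomputable def syzSum (f v : Fin M → MvPolynomial σ K) : MvPolynomial σ K :=
  ∑ j : Fin M, v j * f j

/-- The module of trivial (Koszul) syzygies of `f`. -/
noncomputable def trivSyz (f : Fin M → MvPolynomial σ K) :
    Submodule (MvPolynomial σ K) (Fin M → MvPolynomial σ K) :=
  Submodule.span (MvPolynomial σ K)
    {w | ∃ i j : Fin M, i < j ∧ w = Pi.single j (f i) - Pi.single i (f j)}

/-- A tuple `v` is homogeneous of degree `e` as an element of `⊕ R(-dg j)`. -/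
def TupleHom (dg : Fin M → ℕ) (v : Fin M → MvPolynomial σ K) (e : ℕ) : Prop :=
  ∀ j : Fin M, (v j).IsHomogeneous (e - dg j) ∧ (e < dg j → v j = 0)

end Koszul

end GBPaper

namespace GBPaper

/-- The top part `h|_{y=0}` of a homogeneous polynomial in `R' = R[y]`,
viewed as an element of `R = K[x_1,…,x_n]`. -/
noncomputable def topPartR {K : Type*} [Field K] {n : ℕ}
    (g : MvPolynomial (Fin (n + 1)) K) : MvPolynomial (Fin n) K :=
  MvPolynomial.aeval (Fin.lastCases 0 fun i => MvPolynomial.X i) g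

end GBPaper

open GBPaper

namespace GBAux

open Finsupp GBPaper

section LM

variable {K : Type*} [Field K] {σ : Type*} {m : MonomialOrder σ}

lemma lm_mem {f : MvPolynomial σ K} (hf : f ≠ 0) : lm m f ∈ f.support := by
  obtain ⟨s, hs, hsup⟩ := Finset.exists_mem_eq_sup f.support
    (MvPolynomial.support_nonempty.mpr hf) (fun s => m.toSyn s)
  rw [GBPaper.lm, hsup, AddEquiv.symm_apply_apply]
  exact hs

lemma le_lm {f : MvPolynomial σ K} {s : σ →₀ ℕ} (hs : s ∈ f.support) :
    m.toSyn s ≤ m.toSyn (lm m f) := by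
  rw [GBPaper.lm, AddEquiv.apply_symm_apply]
  exact Finset.le_sup hs

end LM

section Deg

lemma degree_eq_sum_univ {k : ℕ} (d : Fin k →₀ ℕ) : d.degree = ∑ i, d i :=
  Finset.sum_subset (Finset.subset_univ _) (fun i _ hi => Finsupp.notMem_support_iff.mp hi)

lemma degree_mono {k : ℕ} {a b : Fin k →₀ ℕ} (h : a ≤ b) : a.degree ≤ b.degree := by
  rw [degree_eq_sum_univ, degree_eq_sum_univ]
  exact Finset.sum_le_sum fun i _ => Finsupp.le_def.mp h i

lemma sum_id_eq_degree {σ : Type*} (s : σ →₀ ℕ) : (s.sum fun _ e => e) = s.degree := by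
  simp [Finsupp.sum, Finsupp.degree]
  rfl

lemma degree_add' {k : ℕ} (a b : Fin k →₀ ℕ) : (a + b).degree = a.degree + b.degree := by
  rw [degree_eq_sum_univ, degree_eq_sum_univ, degree_eq_sum_univ, ← Finset.sum_add_distrib]
  simp [Finsupp.add_apply]

lemma degree_single' {k : ℕ} (j : Fin k) (c : ℕ) : (Finsupp.single j c).degree = c := by
  rw [degree_eq_sum_univ]
  simp [Finsupp.single_apply]

end Deg

section ExtRestr

variable {n : ℕ}

lemma extX_castSucc (s : Fin n →₀ ℕ) (i : Fin n) : extX s i.castSucc = s i :=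
  Finsupp.embDomain_apply_self Fin.castSuccEmb s i

lemma extX_last (s : Fin n →₀ ℕ) : extX s (Fin.last n) = 0 := by
  apply Finsupp.embDomain_notin_range
  simp only [Fin.coe_castSuccEmb, Set.mem_range, not_exists]
  intro i h
  exact (Fin.castSucc_lt_last i).ne h

lemma restr_apply (a : Fin (n+1) →₀ ℕ) (i : Fin n) : restr a i = a i.castSucc :=
  rfl

lemma extX_restr {a : Fin (n+1) →₀ ℕ} (h : a (Fin.last n) = 0) : extX (restr a) = a := by
  ext i
  induction i using Fin.lastCases with
  | last => rw [extX_last, h]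
  | cast j => rw [extX_castSucc, restr_apply]

lemma degree_extX (s : Fin n →₀ ℕ) : (extX s).degree = s.degree := by
  rw [degree_eq_sum_univ, degree_eq_sum_univ, Fin.sum_univ_castSucc]
  simp [extX_castSucc, extX_last]

lemma degree_restr {a : Fin (n+1) →₀ ℕ} (h : a (Fin.last n) = 0) :
    (restr a).degree = a.degree := by
  conv_rhs => rw [← extX_restr h]
  rw [degree_extX]

lemma mapDomain_castSucc (s : Fin n →₀ ℕ) : Finsupp.mapDomain Fin.castSucc s = extX s := by
  rw [extX, Finsupp.embDomain_eq_mapDomain, Fin.coe_castSuccEmb]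

end ExtRestr

section DRL

variable {n : ℕ} {K : Type*} [Field K] {m' : MonomialOrder (Fin (n+1))}

lemma drl_lt_of_degree_lt (hm' : IsDegRevLex m') {a b : Fin (n+1) →₀ ℕ}
    (h : a.degree < b.degree) : m'.toSyn a < m'.toSyn b :=
  (hm' a b).mpr (Or.inl h)

lemma drl_lt_yfree (hm' : IsDegRevLex m') {a b : Fin (n+1) →₀ ℕ}
    (hdeg : a.degree = b.degree) (hb : b (Fin.last n) = 0) (ha : a (Fin.last n) ≠ 0) :
    m'.toSyn a < m'.toSyn b :=
  (hm' a b).mpr (Or.inr ⟨hdeg, ⟨Fin.last n, by rw [hb]; exact Nat.pos_of_ne_zero ha,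
    fun j hj => absurd (Fin.le_last j) (not_le.mpr hj)⟩⟩)

lemma degree_lm (hm' : IsDegRevLex m') {f : MvPolynomial (Fin (n+1)) K} (hf : f ≠ 0) :
    (lm m' f).degree = f.totalDegree := by
  apply le_antisymm
  · rw [← sum_id_eq_degree]
    exact MvPolynomial.le_totalDegree (lm_mem hf)
  · rw [MvPolynomial.totalDegree]
    apply Finset.sup_le
    intro s hs
    rw [sum_id_eq_degree]
    by_contra hlt
    exact absurd (drl_lt_of_degree_lt hm' (not_le.mp hlt)) (not_lt.mpr (le_lm hs))

end DRL

section SetY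

variable {n : ℕ} {K : Type*} [Field K]

lemma setYZero_add (p q : MvPolynomial (Fin (n+1)) K) :
    setYZero (p + q) = setYZero p + setYZero q :=
  map_add (MvPolynomial.aeval _) p q

lemma setYZero_mul (p q : MvPolynomial (Fin (n+1)) K) :
    setYZero (p * q) = setYZero p * setYZero q :=
  map_mul (MvPolynomial.aeval _) p q

lemma setYZero_sum {ι : Type*} (s : Finset ι) (F : ι → MvPolynomial (Fin (n+1)) K) :
    setYZero (∑ i ∈ s, F i) = ∑ i ∈ s, setYZero (F i) :=
  map_sum (MvPolynomial.aeval _) F s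

lemma setYZero_monomial (a : Fin (n+1) →₀ ℕ) (c : K) :
    setYZero (MvPolynomial.monomial a c) =
      if a (Fin.last n) = 0 then MvPolynomial.monomial a c else 0 := by
  rw [setYZero, MvPolynomial.aeval_monomial]
  by_cases h : a (Fin.last n) = 0
  · rw [if_pos h, MvPolynomial.monomial_eq, MvPolynomial.algebraMap_eq]
    congr 1
    apply Finsupp.prod_congr
    intro i hi
    have hi' : i ≠ Fin.last n := fun hil => Finsupp.mem_support_iff.mp hi (hil ▸ h)
    rw [if_neg hi']
  · rw [if_neg h]
    have hmem : Fin.last n ∈ a.support := Finsupp.mem_support_iff.mpr h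
    rw [Finsupp.prod, Finset.prod_eq_zero hmem (by rw [if_pos rfl]; exact zero_pow h)]
    ring

lemma coeff_setYZero (g : MvPolynomial (Fin (n+1)) K) (u : Fin (n+1) →₀ ℕ) :
    MvPolynomial.coeff u (setYZero g) =
      if u (Fin.last n) = 0 then MvPolynomial.coeff u g else 0 := by
  induction g using MvPolynomial.induction_on' with
  | monomial a c =>
    rw [setYZero_monomial]
    by_cases hu : u (Fin.last n) = 0
    · rw [if_pos hu]
      by_cases ha : a (Fin.last n) = 0
      · rw [if_pos ha]
      · rw [if_neg ha, MvPolynomial.coeff_zero, MvPolynomial.coeff_monomial,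
          if_neg (by rintro rfl; exact ha hu)]
    · rw [if_neg hu]
      by_cases ha : a (Fin.last n) = 0
      · rw [if_pos ha, MvPolynomial.coeff_monomial, if_neg (by rintro rfl; exact hu ha)]
      · rw [if_neg ha, MvPolynomial.coeff_zero]
  | add p q hp hq =>
    rw [setYZero_add, MvPolynomial.coeff_add, MvPolynomial.coeff_add, hp, hq]
    by_cases hu : u (Fin.last n) = 0 <;> simp [hu]

lemma setYZero_rename (p : MvPolynomial (Fin n) K) :
    setYZero (MvPolynomial.rename Fin.castSucc p) = MvPolynomial.rename Fin.castSucc p := by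
  rw [setYZero, MvPolynomial.aeval_rename]
  have h : ((fun i : Fin (n+1) => if i = Fin.last n then 0
        else (MvPolynomial.X i : MvPolynomial (Fin (n+1)) K)) ∘ Fin.castSucc)
      = fun i : Fin n => (MvPolynomial.X i.castSucc : MvPolynomial (Fin (n+1)) K) := by
    funext i
    simp only [Function.comp_apply]
    rw [if_neg (Fin.castSucc_lt_last i).ne]
  rw [h]
  rw [MvPolynomial.rename_eq_aeval]
  rfl

lemma rename_monomial' (s : Fin n →₀ ℕ) (c : K) :
    MvPolynomial.rename Fin.castSucc (MvPolynomial.monomial s c) =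
      MvPolynomial.monomial (extX s) c := by
  rw [MvPolynomial.rename_monomial, mapDomain_castSucc]

lemma homog_isHomogeneous (f : MvPolynomial (Fin n) K) :
    (homog f).IsHomogeneous f.totalDegree := by
  apply MvPolynomial.IsHomogeneous.sum
  intro s hs
  apply MvPolynomial.isHomogeneous_monomial
  rw [degree_add', degree_extX, degree_single']
  have h : s.degree ≤ f.totalDegree := by
    rw [← sum_id_eq_degree]; exact MvPolynomial.le_totalDegree hs
  omega

lemma setYZero_homog (f : MvPolynomial (Fin n) K) :
    setYZero (homog f) = MvPolynomial.rename Fin.castSucc (topPart f) := by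
  rw [homog, setYZero_sum, topPart, MvPolynomial.homogeneousComponent_apply, map_sum,
    Finset.sum_filter]
  apply Finset.sum_congr rfl
  intro s hs
  rw [setYZero_monomial, rename_monomial']
  have hle : s.degree ≤ f.totalDegree := by
    rw [← sum_id_eq_degree]; exact MvPolynomial.le_totalDegree hs
  simp only [Finsupp.add_apply, extX_last, Finsupp.single_eq_same, zero_add]
  by_cases h : s.degree = f.totalDegree
  · have h0 : f.totalDegree - s.degree = 0 := by omega
    rw [if_pos h0, if_pos h, h0, Finsupp.single_zero, add_zero]
  · have h0 : f.totalDegree - s.degree ≠ 0 := by omega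
    rw [if_neg h0, if_neg h]

end SetY

section Span

variable {K : Type*} [Field K] {σ : Type*}

lemma homogeneousComponent_mem_span {S : Set (MvPolynomial σ K)}
    (hS : ∀ p ∈ S, ∃ e, p.IsHomogeneous e)
    {p : MvPolynomial σ K} (hp : p ∈ Ideal.span S) :
    ∀ d : ℕ, MvPolynomial.homogeneousComponent d p ∈ Ideal.span S := by
  refine Submodule.span_induction ?_ ?_ ?_ ?_ hp
  · intro q hq d
    obtain ⟨e, he⟩ := hS q hq
    rw [MvPolynomial.homogeneousComponent_of_mem
      ((MvPolynomial.mem_homogeneousSubmodule e q).mpr he)]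
    split
    · exact Ideal.subset_span hq
    · exact Ideal.zero_mem _
  · intro d
    rw [map_zero]
    exact Ideal.zero_mem _
  · intro x y _ _ hx hy d
    rw [map_add]
    exact Ideal.add_mem _ (hx d) (hy d)
  · intro r q _ hq d
    rw [smul_eq_mul]
    rw [← MvPolynomial.sum_homogeneousComponent r, ← MvPolynomial.sum_homogeneousComponent q,
      Finset.sum_mul_sum, map_sum]
    apply Ideal.sum_mem
    intro i _
    rw [map_sum]
    apply Ideal.sum_mem
    intro j _
    rw [MvPolynomial.homogeneousComponent_of_mem
      ((MvPolynomial.mem_homogeneousSubmodule _ _).mpr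
        ((MvPolynomial.homogeneousComponent_isHomogeneous i r).mul
          (MvPolynomial.homogeneousComponent_isHomogeneous j q)))]
    split
    · exact Ideal.mul_mem_left _ _ (hq j)
    · exact Ideal.zero_mem _

end Span

section Main

variable {K : Type*} [Field K] {n M : ℕ}
  {f : Fin M → MvPolynomial (Fin n) K}
  {m' : MonomialOrder (Fin (n + 1))}
  {Gh : Finset (MvPolynomial (Fin (n + 1)) K)}

lemma main1
    (hArt : ∃ d : ℕ, ∀ g : MvPolynomial (Fin n) K, g.IsHomogeneous d →
      g ∈ Ideal.span (Set.range fun i => topPart (f i)))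
    (hm' : IsDegRevLex m')
    (hGh : IsReducedGB m' (Ideal.span (Set.range fun i => homog (f i))) Gh)
    (s : Fin n →₀ ℕ)
    (hs : s.degree = degReg K (Ideal.span (Set.range fun i => topPart (f i)))) :
    ∃ g ∈ Gh, lm m' g ≤ extX s := by
  set I := Ideal.span (Set.range fun i => topPart (f i)) with hI
  set J := Ideal.span (Set.range fun i => homog (f i)) with hJ
  set D := degReg K I with hDdef
  have hD : ∀ p : MvPolynomial (Fin n) K, p.IsHomogeneous D → p ∈ I :=
    Nat.sInf_mem (s := {d : ℕ | ∀ p : MvPolynomial (Fin n) K, p.IsHomogeneous d → p ∈ I}) hArt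
  have hsI : MvPolynomial.monomial s (1:K) ∈ I :=
    hD _ (MvPolynomial.isHomogeneous_monomial 1 hs)
  rw [hI, Ideal.mem_span_range_iff_exists_fun] at hsI
  obtain ⟨a, ha⟩ := hsI
  set Q0 : MvPolynomial (Fin (n+1)) K :=
    ∑ i, MvPolynomial.rename Fin.castSucc (a i) * homog (f i) with hQ0
  have hQ0J : Q0 ∈ J := by
    apply Ideal.sum_mem
    intro i _
    exact Ideal.mul_mem_left _ _ (Ideal.subset_span ⟨i, rfl⟩)
  have hQ0y : setYZero Q0 = MvPolynomial.monomial (extX s) 1 := by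
    rw [hQ0, setYZero_sum]
    have h : ∀ i, setYZero (MvPolynomial.rename Fin.castSucc (a i) * homog (f i))
        = MvPolynomial.rename Fin.castSucc (a i * topPart (f i)) := by
      intro i
      rw [setYZero_mul, setYZero_rename, setYZero_homog, ← map_mul]
    simp_rw [h]
    rw [← map_sum, ha, rename_monomial']
  set Q := MvPolynomial.homogeneousComponent D Q0 with hQdef
  have hSgen : ∀ p ∈ (Set.range fun i => homog (f i)), ∃ e, MvPolynomial.IsHomogeneous p e := by
    rintro p ⟨i, rfl⟩
    exact ⟨(f i).totalDegree, homog_isHomogeneous (f i)⟩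
  have hQJ : Q ∈ J := homogeneousComponent_mem_span hSgen hQ0J D
  have hQ0c : MvPolynomial.coeff (extX s) Q0 = 1 := by
    have h2 := coeff_setYZero Q0 (extX s)
    rw [hQ0y, if_pos (extX_last s), MvPolynomial.coeff_monomial, if_pos rfl] at h2
    exact h2.symm
  have hcoeff : MvPolynomial.coeff (extX s) Q = 1 := by
    rw [hQdef, MvPolynomial.coeff_homogeneousComponent,
      if_pos (by rw [degree_extX, hs]), hQ0c]
  have hQne : Q ≠ 0 := by
    intro h
    rw [h, MvPolynomial.coeff_zero] at hcoeff
    exact one_ne_zero hcoeff.symm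
  have hsupp : extX s ∈ Q.support :=
    MvPolynomial.mem_support_iff.mpr (by rw [hcoeff]; exact one_ne_zero)
  have hlm : lm m' Q = extX s := by
    have h1 : m'.toSyn (extX s) ≤ m'.toSyn (lm m' Q) := le_lm hsupp
    have h2 : m'.toSyn (lm m' Q) ≤ m'.toSyn (extX s) := by
      have hmem := lm_mem (m := m') hQne
      have hcu : MvPolynomial.coeff (lm m' Q) Q ≠ 0 := MvPolynomial.mem_support_iff.mp hmem
      have hdu : (lm m' Q).degree = D := by
        by_contra hne
        rw [hQdef, MvPolynomial.coeff_homogeneousComponent, if_neg hne] at hcu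
        exact hcu rfl
      by_cases hul : (lm m' Q) (Fin.last n) = 0
      · have hc0 : MvPolynomial.coeff (lm m' Q) Q0 ≠ 0 := by
          rw [hQdef, MvPolynomial.coeff_homogeneousComponent, if_pos hdu] at hcu
          exact hcu
        have h3 := coeff_setYZero Q0 (lm m' Q)
        rw [hQ0y, if_pos hul] at h3
        rw [← h3, MvPolynomial.coeff_monomial] at hc0
        have h4 : extX s = lm m' Q := by
          by_contra hne
          rw [if_neg hne] at hc0
          exact hc0 rfl
        rw [← h4]
      · exact le_of_lt (drl_lt_yfree hm' (by rw [hdu, degree_extX, hs]) (extX_last s) hul)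
    exact m'.toSyn.injective (le_antisymm h2 h1)
  obtain ⟨g, hg, hgle⟩ := hGh.isGB Q hQJ hQne
  rw [hlm] at hgle
  exact ⟨g, hg, hgle⟩

lemma gb_homog (hm' : IsDegRevLex m')
    (hGh : IsReducedGB m' (Ideal.span (Set.range fun i => homog (f i))) Gh)
    {g : MvPolynomial (Fin (n+1)) K} (hg : g ∈ Gh) :
    ∀ u ∈ g.support, u.degree = g.totalDegree := by
  set J := Ideal.span (Set.range fun i => homog (f i)) with hJ
  have hgne : g ≠ 0 := fun h => hGh.zero_not_mem (h ▸ hg)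
  set d := g.totalDegree with hd
  have hgJ : g ∈ J := hGh.subset hg
  have hSgen : ∀ p ∈ (Set.range fun i => homog (f i)), ∃ e, MvPolynomial.IsHomogeneous p e := by
    rintro p ⟨i, rfl⟩
    exact ⟨(f i).totalDegree, homog_isHomogeneous (f i)⟩
  have hhc : MvPolynomial.homogeneousComponent d g ∈ J :=
    homogeneousComponent_mem_span hSgen hgJ d
  set r := g - MvPolynomial.homogeneousComponent d g with hr
  have hrJ : r ∈ J := Ideal.sub_mem _ hgJ hhc
  have hrc : ∀ u, MvPolynomial.coeff u r
      = if u.degree = d then 0 else MvPolynomial.coeff u g := by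
    intro u
    rw [hr, MvPolynomial.coeff_sub, MvPolynomial.coeff_homogeneousComponent]
    split <;> ring
  have hr0 : r = 0 := by
    by_contra hrne
    obtain ⟨g', hg', hg'le⟩ := hGh.isGB r hrJ hrne
    have hlmr := lm_mem (m := m') hrne
    have hclm := MvPolynomial.mem_support_iff.mp hlmr
    rw [hrc] at hclm
    have hdne : (lm m' r).degree ≠ d := by
      intro h
      rw [if_pos h] at hclm
      exact hclm rfl
    rw [if_neg hdne] at hclm
    have hlmg : lm m' r ∈ g.support := MvPolynomial.mem_support_iff.mpr hclm
    by_cases hgg : g' = g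
    · subst hgg
      have h1 : (lm m' g').degree ≤ (lm m' r).degree := degree_mono hg'le
      rw [degree_lm hm' hgne] at h1
      have h2 : (lm m' r).degree ≤ d := by
        rw [hd, ← sum_id_eq_degree]
        exact MvPolynomial.le_totalDegree hlmg
      omega
    · exact hGh.reduced g hg g' hg' (fun h => hgg h.symm) _ hlmg hg'le
  intro u hu
  by_contra hne
  have h := hrc u
  rw [hr0, if_neg hne, MvPolynomial.coeff_zero] at h
  exact MvPolynomial.mem_support_iff.mp hu h.symm

end Main

end GBAux

/-- with `D = d_reg(⟨F^top⟩) < ∞` and `G_hom` the reduced Gröbner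
basis of `⟨F^h⟩` w.r.t. homogenized DRL: every monomial in `x_1,…,x_n` of degree
`D` is divisible by the leading monomial of some element of `(G_hom)_{≤ D}`;
moreover every `g ∈ (G_hom)_D` with nonzero top part has its top part equal to its
leading term. -/
theorem stmt16 {K : Type*} [Field K] {n M : ℕ}
    (f : Fin M → MvPolynomial (Fin n) K) (dg : Fin M → ℕ)
    (hdeg : ∀ i, (f i).totalDegree = dg i) (hpos : ∀ i, 0 < dg i)
    (hArt : ∃ d : ℕ, ∀ g : MvPolynomial (Fin n) K, g.IsHomogeneous d →
      g ∈ Ideal.span (Set.range fun i => topPart (f i)))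
    (m' : MonomialOrder (Fin (n + 1))) (hm' : IsDegRevLex m')
    (Gh : Finset (MvPolynomial (Fin (n + 1)) K))
    (hGh : IsReducedGB m' (Ideal.span (Set.range fun i => homog (f i))) Gh) :
    (∀ s : Fin n →₀ ℕ,
        s.degree = degReg K (Ideal.span (Set.range fun i => topPart (f i))) →
        ∃ g ∈ Gh,
          g.totalDegree ≤ degReg K (Ideal.span (Set.range fun i => topPart (f i))) ∧
          lm m' g ≤ extX s) ∧
    (∀ g ∈ Gh,
        g.totalDegree = degReg K (Ideal.span (Set.range fun i => topPart (f i))) →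
        setYZero g ≠ 0 →
        setYZero g =
          MvPolynomial.monomial (lm m' g) (MvPolynomial.coeff (lm m' g) g)) := by
  constructor
  · intro s hs
    obtain ⟨g, hg, hle⟩ := GBAux.main1 hArt hm' hGh s hs
    refine ⟨g, hg, ?_, hle⟩
    have hgne : g ≠ 0 := fun h => hGh.zero_not_mem (h ▸ hg)
    calc g.totalDegree = (lm m' g).degree := (GBAux.degree_lm hm' hgne).symm
      _ ≤ (extX s).degree := GBAux.degree_mono hle
      _ = s.degree := GBAux.degree_extX s
      _ = _ := hs
  · intro g hg hdeg2 hy0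
    have hgne : g ≠ 0 := fun h => hGh.zero_not_mem (h ▸ hg)
    have hhom := GBAux.gb_homog hm' hGh hg
    have key : ∀ u ∈ g.support, u (Fin.last n) = 0 → u = lm m' g := by
      intro u hu hul
      have hud : u.degree = degReg K (Ideal.span (Set.range fun i => topPart (f i))) := by
        rw [hhom u hu, hdeg2]
      have hrd : (GBPaper.restr u).degree
          = degReg K (Ideal.span (Set.range fun i => topPart (f i))) := by
        rw [GBAux.degree_restr hul, hud]
      obtain ⟨g', hg', hle⟩ := GBAux.main1 hArt hm' hGh (GBPaper.restr u) hrd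
      rw [GBAux.extX_restr hul] at hle
      by_cases hgg : g' = g
      · subst hgg
        have h1 := GBAux.le_lm (m := m') hu
        have h2 := m'.toSyn_monotone hle
        exact (m'.toSyn.injective (le_antisymm h1 h2))
      · exact absurd hle (hGh.reduced g hg g' hg' (fun h => hgg h.symm) u hu)
    obtain ⟨u0, hu0c⟩ := MvPolynomial.ne_zero_iff.mp hy0
    rw [GBAux.coeff_setYZero] at hu0c
    have hu0l : u0 (Fin.last n) = 0 := by
      by_contra h
      rw [if_neg h] at hu0c
      exact hu0c rfl
    rw [if_pos hu0l] at hu0c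
    have hu0 : u0 ∈ g.support := MvPolynomial.mem_support_iff.mpr hu0c
    have hlml : (lm m' g) (Fin.last n) = 0 := by
      rw [← key u0 hu0 hu0l]
      exact hu0l
    ext v
    rw [GBAux.coeff_setYZero, MvPolynomial.coeff_monomial]
    by_cases hv : v (Fin.last n) = 0
    · rw [if_pos hv]
      by_cases hvs : v ∈ g.support
      · rw [if_pos (key v hvs hv).symm, key v hvs hv]
      · rw [MvPolynomial.notMem_support_iff.mp hvs]
        by_cases hlv : lm m' g = v
        · rw [if_pos hlv, hlv, MvPolynomial.notMem_support_iff.mp hvs]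
        · rw [if_neg hlv]
    · rw [if_neg hv, if_neg (fun h => hv (by rw [← h]; exact hlml))]
end

section
/- Let F = (f_1,...,f_m) be a sequence of homogeneous polynomials of positive degrees d_1,...,d_m in R = K[x_1,...,x_n], and let d ≥ max{d_i}. If F is d-regular, then the module of syzygies of F agrees with the module of trivial (Koszul) syzygies in all degrees strictly below d: syz(F)_{<d} = tsyz(F)_{<d}. -/
open MvPolynomial

open GBPaper

namespace GBPaperAux

open MvPolynomial

lemma hc_mul {K : Type*} [Field K] {σ : Type*}
    (t a : ℕ) (p q : MvPolynomial σ K) (hq : q.IsHomogeneous a) :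
    MvPolynomial.homogeneousComponent t (p * q)
      = if a ≤ t then MvPolynomial.homogeneousComponent (t - a) p * q else 0 := by
  conv_lhs => rw [← MvPolynomial.sum_homogeneousComponent p]
  rw [Finset.sum_mul, map_sum]
  rw [Finset.sum_congr rfl (fun i _ => MvPolynomial.homogeneousComponent_of_mem
    ((MvPolynomial.homogeneousComponent_isHomogeneous i p).mul hq))]
  by_cases hat : a ≤ t
  · rw [if_pos hat]
    by_cases hmem : t - a ≤ p.totalDegree
    · rw [Finset.sum_eq_single (t - a)]
      · rw [if_pos (by omega)]
      · intro i hi hne; rw [if_neg (by omega)]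
      · intro h; exact absurd (Finset.mem_range.mpr (by omega)) h
    · have h0 : MvPolynomial.homogeneousComponent (t - a) p = 0 :=
        MvPolynomial.homogeneousComponent_eq_zero (t - a) p (by omega)
      rw [h0, zero_mul]
      apply Finset.sum_eq_zero; intro i hi
      simp only [Finset.mem_range] at hi
      rw [if_neg (by omega)]
  · rw [if_neg hat]
    apply Finset.sum_eq_zero; intro i hi; rw [if_neg (by omega)]

lemma hc_self {K : Type*} [Field K] {σ : Type*} {t : ℕ} {p : MvPolynomial σ K}
    (hp : p.IsHomogeneous t) : MvPolynomial.homogeneousComponent t p = p := by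
  rw [MvPolynomial.homogeneousComponent_of_mem
    (by rwa [MvPolynomial.mem_homogeneousSubmodule]), if_pos rfl]

lemma sum_dite_subtype {α N : Type*} [Fintype α] [AddCommMonoid N]
    {p : α → Prop} [DecidablePred p] [inst : Fintype (Subtype p)] (G : Subtype p → N) :
    (∑ j : α, if h : p j then G ⟨j, h⟩ else 0) = ∑ j : Subtype p, G j := by
  have h1 : ∑ j ∈ Finset.univ.filter p, (if h : p j then G ⟨j, h⟩ else 0)
      = ∑ j : α, (if h : p j then G ⟨j, h⟩ else 0) :=
    Finset.sum_filter_of_ne (by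
      intro x _ hx
      by_contra h
      exact hx (dif_neg h))
  have h2 := Finset.sum_subtype (p := p) (F := inst) (Finset.univ.filter p)
    (fun x => by simp) (fun j => if h : p j then G ⟨j, h⟩ else 0)
  rw [← h1, h2]
  exact Finset.sum_congr rfl fun j _ => by rw [dif_pos j.2]

end GBPaperAux


/-- if a sequence of homogeneous polynomials of positive degrees
`dg i ≤ d` is `d`-regular, then every homogeneous syzygy of degree `< d` is a
trivial (Koszul) syzygy. -/
theorem stmt19 {K : Type*} [Field K] {n M : ℕ}
    (f : Fin M → MvPolynomial (Fin n) K) (dg : Fin M → ℕ)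
    (hhom : ∀ i, (f i).IsHomogeneous (dg i)) (hpos : ∀ i, 0 < dg i)
    (d : ℕ) (hd : ∀ i, dg i ≤ d)
    (hreg : IsDRegularSeq f dg d) :
    ∀ e : ℕ, e < d → ∀ v : Fin M → MvPolynomial (Fin n) K,
      TupleHom dg v e → syzSum f v = 0 → v ∈ trivSyz f := by
  classical
  suffices H : ∀ e : ℕ, e < d → ∀ k : ℕ, k ≤ M → ∀ v : Fin M → MvPolynomial (Fin n) K,
      TupleHom dg v e → syzSum f v = 0 → (∀ j : Fin M, k ≤ j.val → v j = 0) →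
      v ∈ trivSyz f by
    intro e he v hv hs
    exact H e he M le_rfl v hv hs (fun j hj => absurd j.isLt (by omega))
  intro e he k
  induction k with
  | zero =>
    intro _ v hv hs hsupp
    have hv0 : v = 0 := funext fun j => hsupp j (Nat.zero_le _)
    rw [hv0]; exact Submodule.zero_mem _
  | succ k ih =>
    intro hk v hv hs hsupp
    have hkM : k < M := hk
    set i : Fin M := ⟨k, hkM⟩ with hidef
    by_cases hei : e < dg i
    · refine ih (le_of_lt hkM) v hv hs ?_
      intro j hj
      rcases eq_or_lt_of_le hj with hj' | hj'
      · have hji : j = i := Fin.ext hj'.symm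
        rw [hji]; exact (hv i).2 hei
      · exact hsupp j hj'
    · push_neg at hei
      set t := e - dg i with htdef
      have hsum : ∑ j : Fin M, v j * f j = 0 := hs
      have hmemI : v i * f i ∈ prevIdeal f i := by
        have heq : v i * f i = - ∑ j ∈ Finset.univ.erase i, v j * f j := by
          have := Finset.add_sum_erase Finset.univ (fun j => v j * f j) (Finset.mem_univ i)
          rw [hsum] at this
          linear_combination this
        rw [heq]
        refine Submodule.neg_mem _ (Submodule.sum_mem _ fun j hj => ?_)
        rcases lt_or_ge j i with hji | hji
        · exact Ideal.mul_mem_left _ _ (Ideal.subset_span ⟨j, hji, rfl⟩)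
        · have hne : j ≠ i := Finset.ne_of_mem_erase hj
          have hgt : i < j := lt_of_le_of_ne hji (Ne.symm hne)
          rw [hsupp j hgt, zero_mul]
          exact Submodule.zero_mem _
      have hvih : (v i).IsHomogeneous t := (hv i).1
      have hvi : v i ∈ prevIdeal f i := hreg i (v i) t hvih (by omega) hmemI
      rw [prevIdeal, Set.image_eq_range] at hvi
      obtain ⟨c, hc⟩ := Ideal.mem_span_range_iff_exists_fun.mp hvi
      set g : Fin M → MvPolynomial (Fin n) K := fun j =>
        if h : j ∈ {j : Fin M | j < i} then
          (if dg j ≤ t then MvPolynomial.homogeneousComponent (t - dg j) (c ⟨j, h⟩) else 0)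
        else 0 with hgdef
      have hgzero : ∀ j, ¬ j < i → g j = 0 := by
        intro j h
        simp only [hgdef, Set.mem_setOf_eq, dif_neg h]
      have hgzero2 : ∀ j, t < dg j → g j = 0 := by
        intro j h
        by_cases h1 : j ∈ {j : Fin M | j < i}
        · simp only [hgdef, dif_pos h1, if_neg (by omega : ¬ dg j ≤ t)]
        · simp only [hgdef, dif_neg h1]
      have hghom : ∀ j, (g j).IsHomogeneous (t - dg j) := by
        intro j
        by_cases h : j ∈ {j : Fin M | j < i}
        · by_cases h2 : dg j ≤ t
          · simp only [hgdef, dif_pos h, if_pos h2]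
            exact MvPolynomial.homogeneousComponent_isHomogeneous _ _
          · simp only [hgdef, dif_pos h, if_neg h2]
            exact MvPolynomial.isHomogeneous_zero _ _ _
        · simp only [hgdef, dif_neg h]
          exact MvPolynomial.isHomogeneous_zero _ _ _
      have hgf : ∑ j : Fin M, g j * f j = v i := by
        have h1 := congrArg (MvPolynomial.homogeneousComponent t) hc
        rw [map_sum, GBPaperAux.hc_self hvih] at h1
        calc ∑ j : Fin M, g j * f j
            = ∑ j : Fin M, (if h : j ∈ {j : Fin M | j < i} then
                MvPolynomial.homogeneousComponent t (c ⟨j, h⟩ * f j) else 0) := by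
              apply Finset.sum_congr rfl
              intro j _
              by_cases h : j ∈ {j : Fin M | j < i}
              · rw [dif_pos h, GBPaperAux.hc_mul t (dg j) (c ⟨j, h⟩) (f j) (hhom j)]
                by_cases h2 : dg j ≤ t
                · simp only [hgdef, dif_pos h, if_pos h2]
                · simp only [hgdef, dif_pos h, if_neg h2, zero_mul]
              · simp only [hgdef, dif_neg h, zero_mul]
          _ = ∑ j : ↥{j : Fin M | j < i},
                MvPolynomial.homogeneousComponent t (c j * f ↑j) :=
              GBPaperAux.sum_dite_subtype (p := fun j : Fin M => j ∈ {j : Fin M | j < i})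
                (fun j => MvPolynomial.homogeneousComponent t (c j * f ↑j))
          _ = v i := h1
      set u : Fin M → MvPolynomial (Fin n) K :=
        ∑ j : Fin M, g j • (Pi.single i (f j) - Pi.single j (f i)) with hudef
      have hutriv : u ∈ trivSyz f := by
        refine Submodule.sum_mem _ fun j _ => ?_
        by_cases h : j < i
        · exact Submodule.smul_mem _ _ (Submodule.subset_span ⟨j, i, h, rfl⟩)
        · rw [hgzero j h, zero_smul]
          exact Submodule.zero_mem _
      have hul : ∀ l : Fin M, l ≠ i → u l = - (g l * f i) := by
        intro l hl
        rw [hudef, Finset.sum_apply]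
        have hterm : ∀ j : Fin M,
            ((g j • (Pi.single i (f j) - Pi.single j (f i))
                : Fin M → MvPolynomial (Fin n) K)) l
              = - (if l = j then g j * f i else 0) := by
          intro j
          simp only [Pi.smul_apply, Pi.sub_apply, Pi.single_apply, if_neg hl, smul_eq_mul]
          split <;> ring
        rw [Finset.sum_congr rfl fun j _ => hterm j, Finset.sum_neg_distrib,
          Finset.sum_ite_eq Finset.univ l (fun j => g j * f i), if_pos (Finset.mem_univ l)]
      have hui : u i = v i := by
        rw [hudef, Finset.sum_apply, ← hgf]
        apply Finset.sum_congr rfl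
        intro j _
        simp only [Pi.smul_apply, Pi.sub_apply, Pi.single_apply, smul_eq_mul]
        simp only [if_true]
        by_cases h : i = j
        · subst h
          rw [if_pos rfl, hgzero i (lt_irrefl i)]
          ring
        · rw [if_neg h]
          ring
      have hv'hom : TupleHom dg (v - u) e := by
        intro j
        by_cases hji : j = i
        · subst hji
          rw [Pi.sub_apply, hui, sub_self]
          exact ⟨MvPolynomial.isHomogeneous_zero _ _ _, fun _ => rfl⟩
        · rw [Pi.sub_apply, hul j hji, sub_neg_eq_add]
          constructor
          · refine ((hv j).1).add ?_
            by_cases h2 : dg j ≤ t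
            · have hmul := (hghom j).mul (hhom i)
              have hdeg : t - dg j + dg i = e - dg j := by omega
              rwa [hdeg] at hmul
            · rw [hgzero2 j (by omega), zero_mul]
              exact MvPolynomial.isHomogeneous_zero _ _ _
          · intro hlt
            rw [(hv j).2 hlt, hgzero2 j (by omega), zero_mul, add_zero]
      have husum : ∑ j : Fin M, u j * f j = 0 := by
        rw [← Finset.add_sum_erase Finset.univ (fun j => u j * f j) (Finset.mem_univ i)]
        have h1 : ∑ j ∈ Finset.univ.erase i, u j * f j
            = - ((∑ j ∈ Finset.univ.erase i, g j * f j) * f i) := by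
          rw [Finset.sum_mul, ← Finset.sum_neg_distrib]
          apply Finset.sum_congr rfl
          intro j hj
          rw [hul j (Finset.ne_of_mem_erase hj)]
          ring
        have h2 : ∑ j ∈ Finset.univ.erase i, g j * f j = v i := by
          rw [Finset.sum_erase _ (by rw [hgzero i (lt_irrefl i), zero_mul])]
          exact hgf
        rw [hui, h1, h2]
        ring
      have hv'syz : syzSum f (v - u) = 0 := by
        have : syzSum f (v - u) = ∑ j : Fin M, (v j - u j) * f j := rfl
        rw [this]
        simp only [sub_mul]
        rw [Finset.sum_sub_distrib, hsum, husum, sub_zero]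
      have hv'supp : ∀ j : Fin M, k ≤ j.val → (v - u) j = 0 := by
        intro j hj
        rcases eq_or_lt_of_le hj with h | h
        · have hji : j = i := Fin.ext h.symm
          rw [hji, Pi.sub_apply, hui, sub_self]
        · have hji : j ≠ i := by
            intro hh
            rw [hh] at h
            exact lt_irrefl k h
          have hnlt : ¬ j < i := by
            intro hh
            have : j.val < k := hh
            omega
          rw [Pi.sub_apply, hul j hji, hsupp j h, hgzero j hnlt, zero_mul, neg_zero, sub_zero]
      have hv'mem := ih (le_of_lt hkM) (v - u) hv'hom hv'syz hv'supp
      have hvsplit : v = (v - u) + u := by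
        funext l
        simp
      rw [hvsplit]
      exact Submodule.add_mem _ hv'mem hutriv
end
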